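/- For every n ≥ 3, the Lusternik–Schnirelmann category of 𝕊¹_n × 𝕊¹_n satisfies cat(𝕊¹_n × 𝕊¹_n) ≤ 3; in fact the three open sets Q_i = (𝕊¹_n − {y_i}) × (𝕊¹_n − {y_i}), i = 1, 2, 3, cover 𝕊¹_n × 𝕊¹_n and each inclusion Q_i ↪ 𝕊¹_n × 𝕊¹_n is nullhomotopic. -/

import Mathlib

open Set

/-- `X` is covered by `k` open sets, each of whose inclusion maps into `X` is
nullhomotopic. -/
def CatCover (X : Type*) [TopologicalSpace X] (k : ℕ) : Prop :=
  ∃ U : Fin k → Set X,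
    (∀ i, IsOpen (U i)) ∧ (⋃ i, U i) = Set.univ ∧
    ∀ i, ContinuousMap.Nullhomotopic (⟨Subtype.val, continuous_subtype_val⟩ : C(U i, X))

/-- The (unreduced) Lusternik–Schnirelmann category of `X`: the least number of open
sets covering `X` such that each inclusion map into `X` is nullhomotopic. -/
noncomputable def lsCat (X : Type*) [TopologicalSpace X] : ℕ := sInf {k | CatCover X k}
/-- The underlying set of the finite model `𝕊¹_n` of the circle (`2n` points):
`Sum.inl i` is `x_i` and `Sum.inr i` is `y_i`. -/
def SCirc (n : ℕ) : Type := Fin n ⊕ Fin n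

namespace SCirc

/-- The minimal point `x_i` of `𝕊¹_n`. -/
def x {n : ℕ} (i : Fin n) : SCirc n := Sum.inl i

/-- The maximal point `y_i` of `𝕊¹_n`. -/
def y {n : ℕ} (i : Fin n) : SCirc n := Sum.inr i

/-- The partial order on `𝕊¹_n` generated by `x_i < y_i` and `x_{(i-1) mod n} < y_i`. -/
def le {n : ℕ} : SCirc n → SCirc n → Prop
  | Sum.inl i, Sum.inl j => i = j
  | Sum.inr i, Sum.inr j => i = j
  | Sum.inl i, Sum.inr j => i = j ∨ (i : ℕ) = ((j : ℕ) + n - 1) % n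
  | Sum.inr _, Sum.inl _ => False

/-- The Alexandrov topology on `𝕊¹_n`: open sets are down-sets.  The minimal open
neighbourhoods are `x_i^↓ = {x_i}` and `y_i^↓ = {y_i, x_i, x_{(i-1) mod n}}`. -/
instance (n : ℕ) : TopologicalSpace (SCirc n) where
  IsOpen U := ∀ a ∈ U, ∀ b, SCirc.le b a → b ∈ U
  isOpen_univ := fun _ _ _ _ => trivial
  isOpen_inter := fun _ _ hU hV a ha b hba => ⟨hU a ha.1 b hba, hV a ha.2 b hba⟩
  isOpen_sUnion := fun S hS a ha b hba => by
    obtain ⟨U, hUS, haU⟩ := ha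
    exact ⟨U, hUS, hS U hUS a haU b hba⟩

end SCirc

namespace SCircAux

theorem sle_refl {n : ℕ} (a : SCirc n) : SCirc.le a a := by cases a <;> exact rfl

theorem sle_trans {n : ℕ} {a b c : SCirc n} (hab : SCirc.le a b) (hbc : SCirc.le b c) :
    SCirc.le a c := by
  cases a <;> cases b <;> cases c <;> simp_all [SCirc.le]

theorem isOpen_def {n : ℕ} {U : Set (SCirc n)} :
    IsOpen U ↔ ∀ a ∈ U, ∀ b, SCirc.le b a → b ∈ U := Iff.rfl

theorem specializes_iff_sle {n : ℕ} {a b : SCirc n} : a ⤳ b ↔ SCirc.le a b := by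
  rw [specializes_iff_forall_open]
  constructor
  · intro h
    exact h {c | SCirc.le c b} (isOpen_def.mpr (fun p hp q hq => sle_trans hq hp)) (sle_refl b)
  · intro h U hU hb
    exact hU b hb a h

theorem homotopic_of_specializes {Z Y : Type*} [TopologicalSpace Z] [TopologicalSpace Y]
    (f g : C(Z, Y)) (h : ∀ z, f z ⤳ g z) : f.Homotopic g := by
  refine ⟨{ toFun := fun p => if ((p.1 : unitInterval) : ℝ) < 1 then f p.2 else g p.2
            continuous_toFun := ?_
            map_zero_left := fun z => ?_
            map_one_left := fun z => ?_ }⟩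
  · rw [continuous_def]
    intro U hU
    have key : (fun p : unitInterval × Z => if ((p.1 : ℝ)) < 1 then f p.2 else g p.2) ⁻¹' U
        = ({t : unitInterval | (t : ℝ) < 1} ×ˢ (f ⁻¹' U)) ∪
          ((Set.univ : Set unitInterval) ×ˢ (g ⁻¹' U)) := by
      ext ⟨t, z⟩
      simp only [Set.mem_preimage, Set.mem_union, Set.mem_prod, Set.mem_setOf_eq,
        Set.mem_univ, true_and]
      by_cases ht : (t : ℝ) < 1
      · rw [if_pos ht]
        exact ⟨fun hf => Or.inl ⟨ht, hf⟩, fun hh => hh.elim And.right ((h z).mem_open hU)⟩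
      · rw [if_neg ht]
        exact ⟨Or.inr, fun hh => hh.elim (fun p => absurd p.1 ht) id⟩
    rw [key]
    exact ((isOpen_Iio.preimage continuous_subtype_val).prod (hU.preimage f.continuous)).union
      (isOpen_univ.prod (hU.preimage g.continuous))
  · simp
  · norm_num

theorem continuous_of_mono {n : ℕ} {S : Set (SCirc n)} (f : S → SCirc n)
    (hf : ∀ a b : S, SCirc.le (a : SCirc n) b → SCirc.le (f a) (f b)) : Continuous f := by
  rw [continuous_def]
  intro U hU
  have hV : IsOpen {c : SCirc n | ∃ a : S, f a ∈ U ∧ SCirc.le c a} := by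
    refine isOpen_def.mpr (fun p hp q hq => ?_)
    obtain ⟨a, ha, hpa⟩ := hp
    exact ⟨a, ha, sle_trans hq hpa⟩
  have he : f ⁻¹' U = Subtype.val ⁻¹' {c : SCirc n | ∃ a : S, f a ∈ U ∧ SCirc.le c a} := by
    ext b
    constructor
    · intro hb
      exact ⟨b, hb, sle_refl _⟩
    · rintro ⟨a, ha, hba⟩
      exact hU (f a) ha (f b) (hf b a hba)
  rw [he]
  exact hV.preimage continuous_subtype_val

def D {n : ℕ} (k i : Fin n) : ℕ := ((i : ℕ) + (n - (k : ℕ))) % n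

theorem D_lt {n : ℕ} (k i : Fin n) : D k i < n := Nat.mod_lt _ k.pos

theorem key_mod {n : ℕ} (k i : Fin n) : ((k : ℕ) + D k i) % n = (i : ℕ) := by
  have hk : (k : ℕ) < n := k.is_lt
  have hi : (i : ℕ) < n := i.is_lt
  rw [D, Nat.add_mod_mod]
  rw [show (k : ℕ) + ((i : ℕ) + (n - (k : ℕ))) = (i : ℕ) + n by omega]
  rw [Nat.add_mod_right]
  exact Nat.mod_eq_of_lt hi

theorem D_ne_zero {n : ℕ} {k j : Fin n} (h : j ≠ k) : D k j ≠ 0 := by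
  intro h0
  apply h
  have hkm := key_mod k j
  rw [h0, Nat.add_zero, Nat.mod_eq_of_lt k.is_lt] at hkm
  exact Fin.ext hkm.symm

theorem D_pred {n : ℕ} {k i j : Fin n} (hj : j ≠ k)
    (hij : (i : ℕ) = ((j : ℕ) + n - 1) % n) : D k i + 1 = D k j := by
  have hk : (k : ℕ) < n := k.is_lt
  have hj' : (j : ℕ) < n := j.is_lt
  have h1 : D k j ≠ 0 := D_ne_zero hj
  have e1 : D k i = (((j : ℕ) + n - 1) + (n - (k : ℕ))) % n := by
    rw [D, hij, Nat.mod_add_mod]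
  have e2 : D k j = ((j : ℕ) + (n - (k : ℕ))) % n := rfl
  set t := (j : ℕ) + (n - (k : ℕ)) with ht
  have htpos : 1 ≤ t := by omega
  have ht2 : t < 2 * n := by omega
  rw [show (j : ℕ) + n - 1 + (n - (k : ℕ)) = (t - 1) + n by omega, Nat.add_mod_right] at e1
  rcases Nat.lt_or_ge t n with h | h
  · rw [Nat.mod_eq_of_lt h] at e2
    rw [Nat.mod_eq_of_lt (by omega)] at e1
    omega
  · have hmod : t % n = t - n := by rw [Nat.mod_eq_sub_mod h, Nat.mod_eq_of_lt (by omega)]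
    rw [hmod] at e2
    have htn : n + 1 ≤ t := by omega
    rw [Nat.mod_eq_sub_mod (by omega), Nat.mod_eq_of_lt (by omega)] at e1
    omega

def pos {n : ℕ} (k : Fin n) : SCirc n → ℕ
  | Sum.inl i => 2 * D k i
  | Sum.inr j => 2 * D k j - 1

def idx {n : ℕ} (k : Fin n) (m : ℕ) : SCirc n :=
  if m % 2 = 0 then Sum.inl ⟨((k : ℕ) + m / 2) % n, Nat.mod_lt _ k.pos⟩
  else Sum.inr ⟨((k : ℕ) + (m + 1) / 2) % n, Nat.mod_lt _ k.pos⟩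

def phi {n : ℕ} (k : Fin n) (m : ℕ) (a : SCirc n) : SCirc n :=
  if pos k a ≤ m then idx k m else a

theorem idx_pos {n : ℕ} (k : Fin n) (a : SCirc n) (ha : a ≠ Sum.inr k) :
    idx k (pos k a) = a := by
  cases a with
  | inl i =>
      have e1 : pos k (Sum.inl i : SCirc n) = 2 * D k i := rfl
      rw [e1, idx]
      refine (if_pos (show 2 * D k i % 2 = 0 by omega)).trans ?_
      congr 1
      apply Fin.ext
      show ((k : ℕ) + 2 * D k i / 2) % n = (i : ℕ)
      rw [show 2 * D k i / 2 = D k i by omega]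
      exact key_mod k i
  | inr j =>
      have hj : j ≠ k := fun h => ha (by rw [h])
      have h1 : D k j ≠ 0 := D_ne_zero hj
      have e1 : pos k (Sum.inr j : SCirc n) = 2 * D k j - 1 := rfl
      rw [e1, idx]
      refine (if_neg (show ¬ (2 * D k j - 1) % 2 = 0 by omega)).trans ?_
      congr 1
      apply Fin.ext
      show ((k : ℕ) + (2 * D k j - 1 + 1) / 2) % n = (j : ℕ)
      rw [show (2 * D k j - 1 + 1) / 2 = D k j by omega]
      exact key_mod k j

theorem pos_le {n : ℕ} (k : Fin n) (a : SCirc n) : pos k a ≤ 2 * (n - 1) := by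
  cases a with
  | inl i => have := D_lt k i; show 2 * D k i ≤ 2 * (n - 1); omega
  | inr j => have := D_lt k j; show 2 * D k j - 1 ≤ 2 * (n - 1); omega

theorem le_idx_succ {n : ℕ} (k : Fin n) (m : ℕ) (hm : m % 2 = 0) :
    SCirc.le (idx k m) (idx k (m + 1)) := by
  rw [idx, idx]
  refine (congrArg₂ SCirc.le (if_pos hm) (if_neg (show ¬ (m + 1) % 2 = 0 by omega))).mpr ?_
  refine Or.inr ?_
  show ((k : ℕ) + m / 2) % n = (((k : ℕ) + (m + 1 + 1) / 2) % n + n - 1) % n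
  have hn : 1 ≤ n := k.pos
  rw [show (m + 1 + 1) / 2 = m / 2 + 1 by omega]
  rw [show ((k : ℕ) + (m / 2 + 1)) % n + n - 1 = ((k : ℕ) + (m / 2 + 1)) % n + (n - 1) by omega]
  rw [Nat.mod_add_mod]
  rw [show (k : ℕ) + (m / 2 + 1) + (n - 1) = ((k : ℕ) + m / 2) + n by omega]
  rw [Nat.add_mod_right]

theorem idx_succ_le {n : ℕ} (k : Fin n) (m : ℕ) (hm : m % 2 = 1) :
    SCirc.le (idx k (m + 1)) (idx k m) := by
  rw [idx, idx]
  refine (congrArg₂ SCirc.le (if_pos (show (m + 1) % 2 = 0 by omega)) (if_neg (show ¬ m % 2 = 0 by omega))).mpr ?_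
  exact Or.inl rfl

theorem phi_mono {n : ℕ} (k : Fin n) (m : ℕ) {a b : SCirc n}
    (ha : a ≠ Sum.inr k) (hb : b ≠ Sum.inr k) (hab : SCirc.le a b) :
    SCirc.le (phi k m a) (phi k m b) := by
  cases a with
  | inr i =>
    cases b with
    | inl j => exact False.elim hab
    | inr j =>
        have hij : i = j := hab
        subst hij
        exact sle_refl _
  | inl i =>
    cases b with
    | inl j =>
        have hij : i = j := hab
        subst hij
        exact sle_refl _
    | inr j =>
        have hj : j ≠ k := fun h => hb (by rw [h])
        have hDj : D k j ≠ 0 := D_ne_zero hj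
        have hab' : i = j ∨ (i : ℕ) = ((j : ℕ) + n - 1) % n := hab
        have ea : pos k (Sum.inl i : SCirc n) = 2 * D k i := rfl
        have eb : pos k (Sum.inr j : SCirc n) = 2 * D k j - 1 := rfl
        unfold phi
        rcases hab' with heq | hprev
        · subst heq
          by_cases h1 : pos k (Sum.inl i : SCirc n) ≤ m
          · erw [if_pos h1, if_pos (by omega)]
            exact sle_refl _
          · erw [if_neg h1]
            by_cases h2 : pos k (Sum.inr i : SCirc n) ≤ m
            · erw [if_pos h2]
              have hm2 : pos k (Sum.inr i : SCirc n) = m := by omega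
              erw [← hm2, idx_pos k _ hb]
              exact Or.inl rfl
            · erw [if_neg h2]
              exact Or.inl rfl
        · have hD : D k i + 1 = D k j := D_pred hj hprev
          by_cases h2 : pos k (Sum.inr j : SCirc n) ≤ m
          · erw [if_pos (by omega), if_pos h2]
            exact sle_refl _
          · erw [if_neg h2]
            by_cases h1 : pos k (Sum.inl i : SCirc n) ≤ m
            · erw [if_pos h1]
              have hm1 : pos k (Sum.inl i : SCirc n) = m := by omega
              erw [← hm1, idx_pos k _ ha]
              exact Or.inr hprev
            · erw [if_neg h1]
              exact Or.inr hprev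

theorem phi_step_le {n : ℕ} (k : Fin n) (m : ℕ) (hm : m % 2 = 0) {a : SCirc n}
    (ha : a ≠ Sum.inr k) : SCirc.le (phi k m a) (phi k (m + 1) a) := by
  rw [phi, phi]
  by_cases h1 : pos k a ≤ m
  · rw [if_pos h1, if_pos (by omega)]
    exact le_idx_succ k m hm
  · rw [if_neg h1]
    by_cases h2 : pos k a ≤ m + 1
    · rw [if_pos h2]
      have hx : pos k a = m + 1 := by omega
      rw [← hx, idx_pos k a ha]
      exact sle_refl _
    · rw [if_neg h2]
      exact sle_refl _

theorem phi_step_ge {n : ℕ} (k : Fin n) (m : ℕ) (hm : m % 2 = 1) {a : SCirc n}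
    (ha : a ≠ Sum.inr k) : SCirc.le (phi k (m + 1) a) (phi k m a) := by
  rw [phi, phi]
  by_cases h1 : pos k a ≤ m
  · rw [if_pos h1, if_pos (by omega)]
    exact idx_succ_le k m hm
  · rw [if_neg h1]
    by_cases h2 : pos k a ≤ m + 1
    · rw [if_pos h2]
      have hx : pos k a = m + 1 := by omega
      rw [← hx, idx_pos k a ha]
      exact sle_refl _
    · rw [if_neg h2]
      exact sle_refl _

theorem phi_zero {n : ℕ} (k : Fin n) {a : SCirc n} (ha : a ≠ Sum.inr k) :
    phi k 0 a = a := by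
  rw [phi]
  by_cases h : pos k a ≤ 0
  · have h0 : pos k a = 0 := by omega
    rw [if_pos h, ← h0, idx_pos k a ha]
  · rw [if_neg h]

theorem phi_top {n : ℕ} (k : Fin n) (a : SCirc n) :
    phi k (2 * (n - 1)) a = idx k (2 * (n - 1)) := by
  rw [phi, if_pos (pos_le k a)]

theorem null_incl {n : ℕ} (k : Fin n) :
    ContinuousMap.Nullhomotopic
      (⟨Subtype.val, continuous_subtype_val⟩ :
        C(↥(({Sum.inr k}ᶜ : Set (SCirc n)) ×ˢ ({Sum.inr k}ᶜ : Set (SCirc n))),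
          SCirc n × SCirc n)) := by
  set A : Set (SCirc n) := {Sum.inr k}ᶜ with hA
  set Q : Set (SCirc n × SCirc n) := A ×ˢ A with hQdef
  have hmem : ∀ q : Q, q.1.1 ≠ Sum.inr k ∧ q.1.2 ≠ Sum.inr k := fun q => ⟨q.2.1, q.2.2⟩
  have hcont : ∀ m : ℕ, Continuous (fun q : Q => (phi k m q.1.1, phi k m q.1.2)) := by
    intro m
    have h1 : Continuous (fun a : A => phi k m a.1) :=
      continuous_of_mono _ (fun a b hab => phi_mono k m a.2 b.2 hab)
    have c1 : Continuous (fun q : Q => (⟨q.1.1, q.2.1⟩ : A)) :=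
      (continuous_fst.comp continuous_subtype_val).subtype_mk _
    have c2 : Continuous (fun q : Q => (⟨q.1.2, q.2.2⟩ : A)) :=
      (continuous_snd.comp continuous_subtype_val).subtype_mk _
    exact (h1.comp c1).prodMk (h1.comp c2)
  let G : ℕ → C(Q, SCirc n × SCirc n) :=
    fun m => ⟨fun q => (phi k m q.1.1, phi k m q.1.2), hcont m⟩
  have step : ∀ m, (G m).Homotopic (G (m + 1)) := by
    intro m
    rcases Nat.mod_two_eq_zero_or_one m with hm | hm
    · exact homotopic_of_specializes (G m) (G (m + 1)) (fun q =>
        Specializes.prod (specializes_iff_sle.mpr (phi_step_le k m hm (hmem q).1))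
          (specializes_iff_sle.mpr (phi_step_le k m hm (hmem q).2)))
    · exact (homotopic_of_specializes (G (m + 1)) (G m) (fun q =>
        Specializes.prod (specializes_iff_sle.mpr (phi_step_ge k m hm (hmem q).1))
          (specializes_iff_sle.mpr (phi_step_ge k m hm (hmem q).2)))).symm
  have chain : ∀ m, ContinuousMap.Homotopic
      (⟨Subtype.val, continuous_subtype_val⟩ : C(Q, SCirc n × SCirc n)) (G m) := by
    intro m
    induction m with
    | zero =>
        apply homotopic_of_specializes
        intro q
        show q.1 ⤳ (phi k 0 q.1.1, phi k 0 q.1.2)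
        rw [phi_zero k (hmem q).1, phi_zero k (hmem q).2]
    | succ m ih => exact ih.trans (step m)
  refine ⟨(idx k (2 * (n - 1)), idx k (2 * (n - 1))), ?_⟩
  refine (chain (2 * (n - 1))).trans (homotopic_of_specializes _ _ (fun q => ?_))
  have e : (G (2 * (n - 1))) q = (idx k (2 * (n - 1)), idx k (2 * (n - 1))) := by
    show (phi k (2 * (n - 1)) q.1.1, phi k (2 * (n - 1)) q.1.2) = _
    rw [phi_top, phi_top]
  rw [e]
  exact specializes_rfl

theorem exists_avoid {n : ℕ} (hn : 3 ≤ n) (c1 c2 : Fin n) :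
    ∃ i : Fin 3, ((i : ℕ) + 1) % n ≠ (c1 : ℕ) ∧ ((i : ℕ) + 1) % n ≠ (c2 : ℕ) := by
  have e1 : ((0 : ℕ) + 1) % n = 1 := Nat.mod_eq_of_lt (by omega)
  have e2 : ((1 : ℕ) + 1) % n = 2 := Nat.mod_eq_of_lt (by omega)
  have e3 : ((2 : ℕ) + 1) % n = 0 ∨ ((2 : ℕ) + 1) % n = 3 := by
    rcases Nat.lt_or_ge 3 n with h | h
    · right; exact Nat.mod_eq_of_lt h
    · left
      have hn3 : n = 3 := by omega
      subst hn3; rfl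
  by_cases h1 : (c1 : ℕ) = 1 ∨ (c2 : ℕ) = 1
  · by_cases h2 : (c1 : ℕ) = 2 ∨ (c2 : ℕ) = 2
    · have hc1 : (c1 : ℕ) = 1 ∨ (c1 : ℕ) = 2 := by
        rcases h1 with h | h
        · exact Or.inl h
        · rcases h2 with h' | h'
          · exact Or.inr h'
          · omega
      have hc2 : (c2 : ℕ) = 1 ∨ (c2 : ℕ) = 2 := by
        rcases h1 with h | h
        · rcases h2 with h' | h'
          · omega
          · exact Or.inr h'
        · exact Or.inl h
      refine ⟨⟨2, by omega⟩, ?_, ?_⟩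
      · show (2 + 1) % n ≠ (c1 : ℕ)
        rcases e3 with e | e <;> rw [e] <;> omega
      · show (2 + 1) % n ≠ (c2 : ℕ)
        rcases e3 with e | e <;> rw [e] <;> omega
    · refine ⟨⟨1, by omega⟩, ?_, ?_⟩
      · show (1 + 1) % n ≠ (c1 : ℕ)
        rw [e2]; omega
      · show (1 + 1) % n ≠ (c2 : ℕ)
        rw [e2]; omega
  · refine ⟨⟨0, by omega⟩, ?_, ?_⟩
    · show (0 + 1) % n ≠ (c1 : ℕ)
      rw [e1]; omega
    · show (0 + 1) % n ≠ (c2 : ℕ)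
      rw [e1]; omega

end SCircAux

/-- For every `n ≥ 3`, the Lusternik–Schnirelmann category of
`𝕊¹_n × 𝕊¹_n` satisfies `cat(𝕊¹_n × 𝕊¹_n) ≤ 3`; in fact the three open sets
`Q_i = (𝕊¹_n − {y_i}) × (𝕊¹_n − {y_i})`, `i = 1, 2, 3` (indices taken mod `n`),
cover `𝕊¹_n × 𝕊¹_n` and each inclusion `Q_i ↪ 𝕊¹_n × 𝕊¹_n` is nullhomotopic. -/
theorem lsCat_scirc_sq_le_three (n : ℕ) (hn : 3 ≤ n) :
    lsCat (SCirc n × SCirc n) ≤ 3 ∧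
    (let Q : Fin 3 → Set (SCirc n × SCirc n) := fun i =>
      ({SCirc.y ⟨(i.1 + 1) % n, Nat.mod_lt _ (by omega)⟩}ᶜ : Set (SCirc n)) ×ˢ
        ({SCirc.y ⟨(i.1 + 1) % n, Nat.mod_lt _ (by omega)⟩}ᶜ : Set (SCirc n))
     (⋃ i, Q i) = Set.univ ∧
       ∀ i, IsOpen (Q i) ∧
         ContinuousMap.Nullhomotopic
           (⟨Subtype.val, continuous_subtype_val⟩ : C(Q i, SCirc n × SCirc n))) := by
  have hAopen : ∀ c : Fin n, IsOpen ({Sum.inr c}ᶜ : Set (SCirc n)) := by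
    intro c
    refine SCircAux.isOpen_def.mpr (fun a ha b hba => ?_)
    intro hbc
    have hbc : b = Sum.inr c := hbc
    subst hbc
    cases a with
    | inl j => exact hba
    | inr j =>
        apply ha
        show (Sum.inr j : Fin n ⊕ Fin n) = Sum.inr c
        rw [show c = j from hba]
  set a3 : Fin 3 → Fin n := fun i => ⟨((i : ℕ) + 1) % n, Nat.mod_lt _ (by omega)⟩ with ha3
  set Q : Fin 3 → Set (SCirc n × SCirc n) :=
    fun i => ({Sum.inr (a3 i)}ᶜ : Set (SCirc n)) ×ˢ ({Sum.inr (a3 i)}ᶜ : Set (SCirc n)) with hQ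
  have hmemx : ∀ (i : Fin 3) (c : Fin n),
      (Sum.inl c : SCirc n) ∈ ({Sum.inr (a3 i)}ᶜ : Set (SCirc n)) :=
    fun i c hc => by cases (show (Sum.inl c : Fin n ⊕ Fin n) = Sum.inr (a3 i) from hc)
  have hmemy : ∀ (i : Fin 3) (c : Fin n), ((i : ℕ) + 1) % n ≠ (c : ℕ) →
      (Sum.inr c : SCirc n) ∈ ({Sum.inr (a3 i)}ᶜ : Set (SCirc n)) :=
    fun i c h hc => h (congrArg Fin.val (Sum.inr.inj (show (Sum.inr c : Fin n ⊕ Fin n) = Sum.inr (a3 i) from hc))).symm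
  have hcover : (⋃ i, Q i) = Set.univ := by
    rw [Set.eq_univ_iff_forall]
    rintro ⟨p1, p2⟩
    rw [Set.mem_iUnion]
    rcases p1 with i1 | c1 <;> rcases p2 with i2 | c2
    · exact ⟨0, Set.mem_prod.mpr ⟨hmemx _ _, hmemx _ _⟩⟩
    · obtain ⟨i, h1, h2⟩ := SCircAux.exists_avoid hn c2 c2
      exact ⟨i, Set.mem_prod.mpr ⟨hmemx _ _, hmemy _ _ h1⟩⟩
    · obtain ⟨i, h1, h2⟩ := SCircAux.exists_avoid hn c1 c1
      exact ⟨i, Set.mem_prod.mpr ⟨hmemy _ _ h1, hmemx _ _⟩⟩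
    · obtain ⟨i, h1, h2⟩ := SCircAux.exists_avoid hn c1 c2
      exact ⟨i, Set.mem_prod.mpr ⟨hmemy _ _ h1, hmemy _ _ h2⟩⟩
  have hcc : CatCover (SCirc n × SCirc n) 3 :=
    ⟨Q, fun i => (hAopen _).prod (hAopen _), hcover, fun i => SCircAux.null_incl (a3 i)⟩
  constructor
  · exact Nat.sInf_le hcc
  · intro Q'
    exact ⟨hcover, fun i => ⟨(hAopen _).prod (hAopen _), SCircAux.null_incl (a3 i)⟩⟩
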